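/- arXiv:2505.21394 — 6 statements merged into one kernel-verified Lean document; each statement's English description precedes it below -/
import Mathlib

section
/- Let L > 0, ρ ≥ 0, α ∈ (0, 1], and define η_t = 1/(L(1+ρ)(1+ρ+α√t)) for t ≥ 1, γ_t = 1/η_t - 1/η_{t-1}, and L_t = L + γ_t. Then for every integer t ≥ 3, η_t L_t ≤ 2. -/
theorem stmt_6 (L ρ α : ℝ) (hL : 0 < L) (hρ : 0 ≤ ρ) (hα1 : 0 < α) (hα2 : α ≤ 1)
    (η γ Lt : ℕ → ℝ)
    (hη : ∀ t, η t = 1 / (L * (1 + ρ) * (1 + ρ + α * Real.sqrt t)))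
    (hγ : ∀ t, γ t = 1 / η t - 1 / η (t - 1))
    (hLt : ∀ t, Lt t = L + γ t) :
    ∀ t : ℕ, 3 ≤ t → η t * Lt t ≤ 2 := by
  intro t ht
  set st := Real.sqrt t with hst
  set st1 := Real.sqrt (t - 1 : ℕ) with hst1
  have hst0 : 0 ≤ st1 := Real.sqrt_nonneg _
  have hc : ((t - 1 : ℕ) : ℝ) ≤ (t : ℝ) := by exact_mod_cast Nat.sub_le t 1
  have hstge : st1 ≤ st := Real.sqrt_le_sqrt hc
  have hst1le : (1 : ℝ) ≤ st := by
    exact Real.one_le_sqrt.mpr (Nat.one_le_cast.mpr (by omega))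
  have hs : (0:ℝ) < 1 + ρ := by linarith
  have hA : (0:ℝ) < L * (1 + ρ) * (1 + ρ + α * st) := by
    apply mul_pos (mul_pos hL hs); nlinarith
  have hB : (0:ℝ) < L * (1 + ρ) * (1 + ρ + α * st1) := by
    apply mul_pos (mul_pos hL hs); nlinarith
  have hγval : γ t = L * (1 + ρ) * (α * st) - L * (1 + ρ) * (α * st1) := by
    rw [hγ, hη, hη, one_div_one_div, one_div_one_div]; ring
  rw [hη, hLt, hγval, div_mul_eq_mul_div, ← hst, div_le_iff₀ hA]
  nlinarith [mul_pos hL hs, mul_nonneg (mul_nonneg (mul_pos hL hs).le hα1.le) hst0,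
    mul_nonneg (mul_nonneg (mul_pos hL hs).le hα1.le) (by linarith : (0:ℝ) ≤ st),
    mul_nonneg hρ hρ, mul_nonneg (mul_nonneg hρ hα1.le) (by linarith : (0:ℝ) ≤ st)]
end

section
/- Let L > 0, ρ ≥ 0, α ∈ (0, 1], η_t = 1/(L(1+ρ)(1+ρ+α√t)), γ_t = 1/η_t - 1/η_{t-1}, and L_t = L + γ_t. Then for every integer t ≥ 3, (1/2)η_t - (1/4)η_t² L_t - (1/2)ρ η_t² L_t ≥ η_t/8. -/
set_option maxHeartbeats 800000


theorem stmt_9 (L ρ α : ℝ) (hL : 0 < L) (hρ : 0 ≤ ρ) (hα1 : 0 < α) (hα2 : α ≤ 1)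
    (η γ Lt : ℕ → ℝ)
    (hη : ∀ t, η t = 1 / (L * (1 + ρ) * (1 + ρ + α * Real.sqrt t)))
    (hγ : ∀ t, γ t = 1 / η t - 1 / η (t - 1))
    (hLt : ∀ t, Lt t = L + γ t) :
    ∀ t : ℕ, 3 ≤ t →
      1 / 2 * η t - 1 / 4 * η t ^ 2 * Lt t - 1 / 2 * ρ * η t ^ 2 * Lt t ≥ η t / 8 := by
  intro t ht
  have ht1 : (1:ℕ) ≤ t := by omega
  have hcast : ((t - 1 : ℕ) : ℝ) = (t : ℝ) - 1 := by
    push_cast [Nat.cast_sub ht1]; ring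
  have ht3 : (3:ℝ) ≤ (t : ℝ) := by exact_mod_cast ht
  set s' := Real.sqrt ((t - 1 : ℕ) : ℝ) with hs'def
  set s := Real.sqrt (t : ℝ) with hsdef
  have hs'0 : 0 ≤ s' := Real.sqrt_nonneg _
  have hs'sq : s' ^ 2 = (t : ℝ) - 1 := by
    rw [hs'def, Real.sq_sqrt (by rw [hcast]; linarith)]
    exact hcast
  have hs'43 : (4/3 : ℝ) ≤ s' := by
    nlinarith [hs'sq, hs'0]
  have hΔ0 : s' ≤ s := Real.sqrt_le_sqrt (by rw [hcast]; linarith)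
  have hΔ : s ≤ s' + 1/3 := by
    rw [hsdef, show s' + 1/3 = Real.sqrt ((s' + 1/3)^2) from
      (Real.sqrt_sq (by linarith)).symm]
    apply Real.sqrt_le_sqrt
    nlinarith [hs'sq, hs'43]
  have h1ρ : (0:ℝ) < 1 + ρ := by linarith
  have hden : (0:ℝ) < 1 + ρ + α * s := by nlinarith
  have hden' : (0:ℝ) < 1 + ρ + α * s' := by nlinarith
  have hD : (0:ℝ) < L * (1 + ρ) * (1 + ρ + α * s) := by positivity
  have hD' : (0:ℝ) < L * (1 + ρ) * (1 + ρ + α * s') := by positivity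
  have hηt : η t = 1 / (L * (1 + ρ) * (1 + ρ + α * s)) := hη t
  have hηt' : η (t - 1) = 1 / (L * (1 + ρ) * (1 + ρ + α * s')) := hη (t - 1)
  have hγt : γ t = L * (1 + ρ) * (1 + ρ + α * s) - L * (1 + ρ) * (1 + ρ + α * s') := by
    rw [hγ, hηt, hηt', one_div_one_div, one_div_one_div]
  have hLtt : Lt t = L + (L * (1 + ρ) * (1 + ρ + α * s) - L * (1 + ρ) * (1 + ρ + α * s')) := by
    rw [hLt, hγt]
  have key : (1 + 2*ρ) * (1 + (1 + ρ) * (α * (s - s'))) ≤ 3/2 * ((1 + ρ) * (1 + ρ + α * s)) := by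
    have hx0 : 0 ≤ α * (s - s') := by nlinarith
    have hx1 : α * (s - s') ≤ 1/3 := by nlinarith
    have h1 : (1+2*ρ)*(1+ρ)*(α*(s-s')) ≤ (1+2*ρ)*(1+ρ)*(1/3) :=
      mul_le_mul_of_nonneg_left hx1 (by positivity)
    have h2 : 0 ≤ (1+ρ)*(α*s) := by
      have : 0 ≤ s := le_trans hs'0 hΔ0
      positivity
    nlinarith [h1, h2, sq_nonneg ρ]
  rw [hηt, hLtt, ge_iff_le]
  have hDne : L * (1 + ρ) * (1 + ρ + α * s) ≠ 0 := ne_of_gt hD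
  have keyL := mul_le_mul_of_nonneg_left key hL.le
  have hnum : 0 ≤ 3/2 * (L * (1 + ρ) * (1 + ρ + α * s)) -
      (1 + 2*ρ) * (L + (L * (1 + ρ) * (1 + ρ + α * s) - L * (1 + ρ) * (1 + ρ + α * s'))) := by
    nlinarith [keyL]
  have heq : 1 / 2 * (1 / (L * (1 + ρ) * (1 + ρ + α * s))) -
      1 / 4 * (1 / (L * (1 + ρ) * (1 + ρ + α * s))) ^ 2 *
        (L + (L * (1 + ρ) * (1 + ρ + α * s) - L * (1 + ρ) * (1 + ρ + α * s'))) -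
      1 / 2 * ρ * (1 / (L * (1 + ρ) * (1 + ρ + α * s))) ^ 2 *
        (L + (L * (1 + ρ) * (1 + ρ + α * s) - L * (1 + ρ) * (1 + ρ + α * s'))) -
      (1 / (L * (1 + ρ) * (1 + ρ + α * s))) / 8 =
      (3/2 * (L * (1 + ρ) * (1 + ρ + α * s)) -
        (1 + 2*ρ) * (L + (L * (1 + ρ) * (1 + ρ + α * s) - L * (1 + ρ) * (1 + ρ + α * s')))) /
        (4 * (L * (1 + ρ) * (1 + ρ + α * s)) ^ 2) := by
    field_simp
    ring
  have hpos : (0:ℝ) < 4 * (L * (1 + ρ) * (1 + ρ + α * s)) ^ 2 := by positivity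
  linarith [heq, div_nonneg hnum hpos.le]
end

section
/- Let L > 0, ρ ≥ 0, α ∈ (0, 1], η_t = 1/(L(1+ρ)(1+ρ+α√t)), γ_t = 1/η_t - 1/η_{t-1}, and L_t = L + γ_t. Then for every integer t ≥ 3, (γ_{t-1} - γ_t)/2 - (1/2)γ_t² η_t + (1/4)γ_t² η_t² L_t ≥ 0. -/
set_option maxHeartbeats 1000000 in
theorem stmt_10 (L ρ α : ℝ) (hL : 0 < L) (hρ : 0 ≤ ρ) (hα1 : 0 < α) (hα2 : α ≤ 1)
    (η γ Lt : ℕ → ℝ)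
    (hη : ∀ t, η t = 1 / (L * (1 + ρ) * (1 + ρ + α * Real.sqrt t)))
    (hγ : ∀ t, γ t = 1 / η t - 1 / η (t - 1))
    (hLt : ∀ t, Lt t = L + γ t) :
    ∀ t : ℕ, 3 ≤ t →
      (γ (t - 1) - γ t) / 2 - 1 / 2 * γ t ^ 2 * η t + 1 / 4 * γ t ^ 2 * η t ^ 2 * Lt t ≥ 0 := by
  intro t ht
  have ht1 : ((t - 1 : ℕ) : ℝ) = (t : ℝ) - 1 := by
    have h1 : (1:ℕ) ≤ t := by omega
    push_cast [Nat.cast_sub h1]; ring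
  have ht2 : ((t - 1 - 1 : ℕ) : ℝ) = (t : ℝ) - 2 := by
    have h0 : t - 1 - 1 = t - 2 := by omega
    rw [h0]
    have h2 : (2:ℕ) ≤ t := by omega
    push_cast [Nat.cast_sub h2]; ring
  have ht3 : (3:ℝ) ≤ (t:ℝ) := by exact_mod_cast ht
  set s := Real.sqrt t with hs
  set b := Real.sqrt ((t:ℝ) - 1) with hb
  set a := Real.sqrt ((t:ℝ) - 2) with ha
  have ha0 : 0 ≤ a := Real.sqrt_nonneg _
  have hb0 : 0 ≤ b := Real.sqrt_nonneg _
  have hs0 : 0 ≤ s := Real.sqrt_nonneg _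
  have hssq : s ^ 2 = (t:ℝ) := Real.sq_sqrt (by linarith)
  have hasq : a ^ 2 = s ^ 2 - 2 := by rw [hssq]; exact Real.sq_sqrt (by linarith)
  have hbsq : b ^ 2 = s ^ 2 - 1 := by rw [hssq]; exact Real.sq_sqrt (by linarith)
  have hab : a ≤ b := Real.sqrt_le_sqrt (by linarith)
  have hbs : b ≤ s := Real.sqrt_le_sqrt (by linarith)
  have hρ1 : (0:ℝ) < 1 + ρ := by linarith
  have hs1 : (1:ℝ) ≤ s := by nlinarith
  have hb1 : (1:ℝ) ≤ b := by nlinarith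
  have hDs : (0:ℝ) < 1 + ρ + α * s := by nlinarith
  have hD : (0:ℝ) < L * (1 + ρ) * (1 + ρ + α * s) := by positivity
  -- explicit forms
  have eηt : η t = 1 / (L * (1 + ρ) * (1 + ρ + α * s)) := hη t
  have eηt1 : η (t - 1) = 1 / (L * (1 + ρ) * (1 + ρ + α * b)) := by
    rw [hη (t-1), ht1]
  have eηt2 : η (t - 1 - 1) = 1 / (L * (1 + ρ) * (1 + ρ + α * a)) := by
    rw [hη (t-1-1), ht2]
  have e1 : γ t = L * (1 + ρ) * α * (s - b) := by
    rw [hγ t, eηt, eηt1, one_div_one_div, one_div_one_div]; ring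
  have e2 : γ (t - 1) = L * (1 + ρ) * α * (b - a) := by
    rw [hγ (t-1), eηt1, eηt2, one_div_one_div, one_div_one_div]; ring
  -- core inequality: (2b - a - s)(1+s) ≥ (s-b)^2
  have hq : (s + a) * (a + b) ≤ 2 * (1 + s) * (s + b) := by
    have h1 : (s + a) * (a + b) ≤ (s + b) * (b + b) :=
      mul_le_mul (by linarith) (by linarith) (by linarith) (by linarith)
    have h2 : (s + b) * (b + b) ≤ (s + b) * (2 * (1 + s)) :=
      mul_le_mul_of_nonneg_left (by linarith) (by linarith)
    linarith [h1, h2]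
  have hP : (0:ℝ) < (s + a) * (a + b) * (s + b) ^ 2 := by
    have : (0:ℝ) < s + a := by linarith
    have : (0:ℝ) < a + b := by linarith
    positivity
  have expand : (s + a) * (a + b) * (s + b) ^ 2 * ((2*b - a - s) * (1 + s) - (s - b)^2)
      = 2 * (1 + s) * (s + b) - (s + a) * (a + b) := by
    linear_combination
      (1 - 2*s^3 - 3*s^4 - 3*b*s^2 - 3*b*s^3 + 2*b^2*s^2 + b^3 + b^3*s - b^4 - a*s^2
        - a*s^3 - 2*a*b*s - 2*a*b*s^2 - a*b^2 - a*b^2*s) * hasq +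
      (-2 - 2*s - 3*s^2 + 2*s^3 + 3*s^4 - 2*b - b*s + 4*b*s^2 + 5*b*s^3 + 2*b^2 + 2*b^2*s
        + b^2*s^2 - b^3*s + a*s + 2*a*s^2 + 3*a*s^3 + a*b + 4*a*b*s + 5*a*b*s^2 + 2*a*b^2
        + a*b^2*s - a*b^3) * hbsq
  have hX : 0 ≤ (2*b - a - s) * (1 + s) - (s - b)^2 := by
    have h1 : 0 ≤ (s + a) * (a + b) * (s + b) ^ 2 * ((2*b - a - s) * (1 + s) - (s - b)^2) := by
      linarith [expand, hq]
    exact nonneg_of_mul_nonneg_right h1 hP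
  have h2bas : 0 ≤ 2*b - a - s := by
    have h1 : 0 ≤ (2*b - a - s) * (1 + s) := le_trans (sq_nonneg (s-b)) (by linarith [hX])
    exact nonneg_of_mul_nonneg_left h1 (by linarith)
  have hγnn : 0 ≤ γ t := by
    rw [e1]
    exact mul_nonneg (mul_nonneg (mul_nonneg hL.le hρ1.le) hα1.le) (sub_nonneg.2 hbs)
  have key2 : α * (s - b)^2 ≤ (2*b - a - s) * (1 + ρ + α * s) := by
    have c1 := mul_nonneg h2bas (show (0:ℝ) ≤ 1 + ρ - α by linarith)
    have c2 := mul_nonneg hα1.le hX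
    linarith [c1, c2]
  have h5 : γ t ^ 2 * η t ≤ γ (t - 1) - γ t := by
    rw [e1, e2, eηt, mul_one_div, div_le_iff₀ hD]
    have h := mul_le_mul_of_nonneg_left key2
      (show (0:ℝ) ≤ L^2 * (1+ρ)^2 * α by positivity)
    linarith [h]
  have hηpos : 0 < η t := by rw [eηt]; positivity
  have hLtpos : 0 < Lt t := by rw [hLt t]; linarith
  have hlast : 0 ≤ 1 / 4 * γ t ^ 2 * η t ^ 2 * Lt t := by positivity
  linarith [h5, hlast]
end

section
/- Let η > 0, α ≥ 0, and define η_t = η/(1 + α√t) for t ≥ 1 and γ_t = 1/η_t - 1/η_{t-1} = (α/η)(√t - √(t-1)). Then for every integer t ≥ 2, γ_{t-1} - γ_t - γ_t² η_t ≥ 0. -/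
lemma aux_hX (a b s : ℝ) (ha0 : 0 ≤ a) (hb2 : b ^ 2 = a ^ 2 + 1)
    (hs2 : s ^ 2 = b ^ 2 + 1) (hab : a ≤ b) (hbs : b ≤ s) : s - b ≤ b - a := by
  nlinarith [mul_nonneg (sub_nonneg.2 hbs) (sub_nonneg.2 hab)]

lemma aux_hY (a b s : ℝ) (ha0 : 0 ≤ a) (hb2 : b ^ 2 = a ^ 2 + 1)
    (hs2 : s ^ 2 = b ^ 2 + 1) (hab : a ≤ b) (hbs : b ≤ s) (hb1 : 1 ≤ b) :
    0 ≤ s * ((b - a) - (s - b)) - (s - b) ^ 2 := by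
  have hs0 : 0 ≤ s := le_trans (le_trans zero_le_one hb1) hbs
  have e1 : s ^ 2 = a ^ 2 + 2 := by linarith
  have hab2 : a * b ≤ a ^ 2 + 1 / 2 := by nlinarith [sq_nonneg (a - b)]
  have hX2 : (2 * a ^ 2 + 3 + a * b) ^ 2
      = 5 * a ^ 4 + 13 * a ^ 2 + 9 + 4 * (a ^ 2 * (a * b)) + 6 * (a * b) := by
    have h : (2 * a ^ 2 + 3 + a * b) ^ 2
        = (2 * a ^ 2 + 3) ^ 2 + 2 * (2 * a ^ 2 + 3) * (a * b) + a ^ 2 * b ^ 2 := by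
      ring
    rw [h, hb2]; ring
  have hY2 : (s * (2 * a + b)) ^ 2
      = 5 * a ^ 4 + 11 * a ^ 2 + 2 + 4 * (a ^ 2 * (a * b)) + 8 * (a * b) := by
    have h : (s * (2 * a + b)) ^ 2
        = s ^ 2 * (4 * a ^ 2 + 4 * (a * b)) + s ^ 2 * b ^ 2 := by ring
    rw [h, e1, hb2]; ring
  have hdiff : (s * (2 * a + b)) ^ 2 + 6 ≤ (2 * a ^ 2 + 3 + a * b) ^ 2 := by
    rw [hX2, hY2]; linarith
  have hXpos : 0 < 2 * a ^ 2 + 3 + a * b := by nlinarith [mul_nonneg ha0 (le_trans ha0 hab)]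
  have hYpos : 0 ≤ s * (2 * a + b) := by positivity
  have hXgeY : s * (2 * a + b) ≤ 2 * a ^ 2 + 3 + a * b := by nlinarith [hdiff, hXpos, hYpos]
  have hG : 0 ≤ s ^ 2 + b ^ 2 + a * b - 2 * s * a - s * b := by
    have h : s ^ 2 + b ^ 2 + a * b - 2 * s * a - s * b
        = (2 * a ^ 2 + 3 + a * b) - s * (2 * a + b) := by rw [e1, hb2]; ring
    linarith [h.ge, h.le]
  have hpos : 0 < (a + b) * (s + b) := by nlinarith
  have hmul : (s * ((b - a) - (s - b)) - (s - b) ^ 2) * ((a + b) * (s + b))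
      = s ^ 2 + b ^ 2 + a * b - 2 * s * a - s * b := by
    have h1 : b ^ 2 - a ^ 2 = 1 := by linarith
    have h2 : s ^ 2 - b ^ 2 = 1 := by linarith
    linear_combination s * (s + b) * h1 - (2 * s - b) * (a + b) * h2
  exact nonneg_of_mul_nonneg_right (by rw [mul_comm, hmul]; exact hG) hpos

set_option maxHeartbeats 800000 in
theorem stmt_11 (η α : ℝ) (hη : 0 < η) (hα : 0 ≤ α)
    (ηs γ : ℕ → ℝ)
    (hηs : ∀ t, ηs t = η / (1 + α * Real.sqrt t))
    (hγ : ∀ t ≥ 1, γ t = 1 / ηs t - 1 / ηs (t - 1)) :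
    ∀ t : ℕ, 2 ≤ t → γ (t - 1) - γ t - γ t ^ 2 * ηs t ≥ 0 := by
  intro t ht
  have c1 : ((t - 1 : ℕ) : ℝ) = (t : ℝ) - 1 := by
    rw [Nat.cast_sub (by omega)]; norm_num
  have c2 : ((t - 2 : ℕ) : ℝ) = (t : ℝ) - 2 := by
    rw [Nat.cast_sub (by omega)]; norm_num
  set s := Real.sqrt t with hs
  set b := Real.sqrt ((t : ℝ) - 1) with hbdef
  set a := Real.sqrt ((t : ℝ) - 2) with hadef
  have ht2 : (2 : ℝ) ≤ (t : ℝ) := by exact_mod_cast ht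
  have ha0 : 0 ≤ a := Real.sqrt_nonneg _
  have hb0 : 0 ≤ b := Real.sqrt_nonneg _
  have hs0 : 0 ≤ s := Real.sqrt_nonneg _
  have ha2 : a ^ 2 = (t : ℝ) - 2 := Real.sq_sqrt (by linarith)
  have hb2 : b ^ 2 = (t : ℝ) - 1 := Real.sq_sqrt (by linarith)
  have hs2 : s ^ 2 = (t : ℝ) := Real.sq_sqrt (by linarith)
  have hab : a ≤ b := Real.sqrt_le_sqrt (by linarith)
  have hbs : b ≤ s := Real.sqrt_le_sqrt (by linarith)
  have hb1 : 1 ≤ b := by nlinarith [hb2]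
  have hds : 0 < 1 + α * s := by positivity
  have hdb : 0 < 1 + α * b := by positivity
  have hda : 0 < 1 + α * a := by positivity
  have eηt : ηs t = η / (1 + α * s) := hηs t
  have eηb : ηs (t - 1) = η / (1 + α * b) := by rw [hηs, c1]
  have eηa : ηs (t - 1 - 1) = η / (1 + α * a) := by
    have h : t - 1 - 1 = t - 2 := by omega
    rw [h, hηs, c2]
  have eγt : γ t = α * (s - b) / η := by
    rw [hγ t (by omega), eηt, eηb]
    field_simp
    ring
  have eγt1 : γ (t - 1) = α * (b - a) / η := by
    rw [hγ (t - 1) (by omega), eηb, eηa]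
    field_simp
    ring
  rw [eγt, eγt1, eηt]
  have key : α * (b - a) / η - α * (s - b) / η -
      (α * (s - b) / η) ^ 2 * (η / (1 + α * s)) =
      (α * ((b - a) - (s - b)) * (1 + α * s) - α ^ 2 * (s - b) ^ 2) /
        (η * (1 + α * s)) := by
    field_simp
  rw [key]
  apply div_nonneg _ (by positivity)
  have hX : s - b ≤ b - a := aux_hX a b s ha0 (by linarith) (by linarith) hab hbs
  have hY : 0 ≤ s * ((b - a) - (s - b)) - (s - b) ^ 2 :=
    aux_hY a b s ha0 (by linarith) (by linarith) hab hbs hb1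
  have hsplit : α * ((b - a) - (s - b)) * (1 + α * s) - α ^ 2 * (s - b) ^ 2 =
      α * ((b - a) - (s - b)) + α ^ 2 * (s * ((b - a) - (s - b)) - (s - b) ^ 2) := by
    ring
  rw [hsplit]
  have h1 : 0 ≤ α * ((b - a) - (s - b)) := mul_nonneg hα (by linarith)
  have h2 : 0 ≤ α ^ 2 * (s * ((b - a) - (s - b)) - (s - b) ^ 2) :=
    mul_nonneg (sq_nonneg _) hY
  linarith
end

section
/- For every real τ ≥ 2, 4√(τ-1) - √(τ-2) - 3√τ + 1/√τ ≥ 0. -/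
theorem stmt_13 : ∀ τ : ℝ, 2 ≤ τ →
    4 * Real.sqrt (τ - 1) - Real.sqrt (τ - 2) - 3 * Real.sqrt τ + 1 / Real.sqrt τ ≥ 0 := by
  intro τ hτ
  set a := Real.sqrt (τ - 1) with ha'
  set b := Real.sqrt τ with hb'
  set c := Real.sqrt (τ - 2) with hc'
  have ha0 : 0 ≤ a := Real.sqrt_nonneg _
  have hc0 : 0 ≤ c := Real.sqrt_nonneg _
  have hb0 : 0 < b := Real.sqrt_pos.mpr (by linarith)
  have ha2 : a ^ 2 = τ - 1 := Real.sq_sqrt (by linarith)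
  have hb2 : b ^ 2 = τ := Real.sq_sqrt (by linarith)
  have hc2 : c ^ 2 = τ - 2 := Real.sq_sqrt (by linarith)
  -- step 1 : 2*b*c*(3*τ-1) ≤ 6*τ^2 - 8*τ - 1
  have hbc : (b * c) ^ 2 = τ * (τ - 2) := by rw [mul_pow, hb2, hc2]
  have hbc0 : 0 ≤ b * c := mul_nonneg hb0.le hc0
  have h0 : 2 * (b * c) * (3 * τ - 1) ≤ 6 * τ ^ 2 - 8 * τ - 1 := by
    nlinarith [sq_nonneg (6 * τ ^ 2 - 8 * τ - 1 - 2 * (b * c) * (3 * τ - 1)),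
      sq_nonneg (6 * τ ^ 2 - 8 * τ - 1 + 2 * (b * c) * (3 * τ - 1)),
      mul_nonneg hbc0 (by linarith : (0:ℝ) ≤ 3 * τ - 1), sq_nonneg τ]
  -- step 2 : 4*a*b ≥ b*c + 3*τ - 1
  have h1 : b * c + 3 * τ - 1 ≤ 4 * (a * b) := by
    have hab0 : 0 ≤ a * b := mul_nonneg ha0 hb0.le
    have hab : (a * b) ^ 2 = (τ - 1) * τ := by rw [mul_pow, ha2, hb2]
    nlinarith [sq_nonneg (4 * (a * b) - (b * c + 3 * τ - 1)),
      sq_nonneg (4 * (a * b) + (b * c + 3 * τ - 1))]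
  have key : 0 ≤ (4 * (a * b) - c * b - 3 * b ^ 2 + 1) / b :=
    div_nonneg (by nlinarith) hb0.le
  have : (4 * (a * b) - c * b - 3 * b ^ 2 + 1) / b = 4 * a - c - 3 * b + 1 / b := by
    field_simp
  linarith [this ▸ key]
end

section
/- Let L > 0, σ > 0 and η_t = 1/(L + σ√t). Then Σ_{t=1}^T η_t²·(L + σ(√t - √(t-1))) ≤ (2/σ²)·log(1 + σ√T/L)·(L + σ) ≤ (2(L+σ)/σ²)·log(1 + σ√T/L). -/
lemma telescope_aux (g : ℕ → ℝ) (T : ℕ) :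
    ∑ t ∈ Finset.Icc 1 T, (g t - g (t - 1)) = g T - g 0 := by
  induction T with
  | zero => simp
  | succ n ih =>
    rw [Finset.sum_Icc_succ_top (by omega : 1 ≤ n + 1), ih]
    simp

lemma per_term (L σ s p : ℝ) (hL : 0 < L) (hσ : 0 < σ) (hp0 : 0 ≤ p) (hs1 : 1 ≤ s)
    (hps : p ≤ s) (hdiff : (s - p) * (s + p) = 1) :
    (1 / (L + σ * s)) ^ 2 * (L + σ * (s - p))
      ≤ 2 / σ ^ 2 * (Real.log (L + σ * s) - Real.log (L + σ * p)) * (L + σ) := by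
  have hA0 : 0 < L + σ * s := by nlinarith
  have hB0 : 0 < L + σ * p := by nlinarith
  have hsmp_le : s - p ≤ 1 := by nlinarith
  have hsmp_ge : 1 / (2 * s) ≤ s - p := by
    rw [div_le_iff₀ (by linarith)]
    nlinarith
  have hlog : σ * (s - p) / (L + σ * s) ≤ Real.log (L + σ * s) - Real.log (L + σ * p) := by
    have h := Real.log_le_sub_one_of_pos (show 0 < (L + σ * p) / (L + σ * s) by positivity)
    rw [Real.log_div hB0.ne' hA0.ne'] at h
    have heq : (L + σ * p) / (L + σ * s) - 1 = -(σ * (s - p) / (L + σ * s)) := by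
      field_simp; ring
    rw [heq] at h
    linarith
  have step1 : (1 / (L + σ * s)) ^ 2 * (L + σ * (s - p)) ≤ (L + σ) / (L + σ * s) ^ 2 := by
    have heq : (1 / (L + σ * s)) ^ 2 * (L + σ * (s - p))
        = (L + σ * (s - p)) / (L + σ * s) ^ 2 := by field_simp
    rw [heq]
    gcongr
    nlinarith
  have step2 : (L + σ) / (L + σ * s) ^ 2
      ≤ 2 / σ ^ 2 * (σ * (s - p) / (L + σ * s)) * (L + σ) := by
    have h2s : 1 ≤ 2 * s * (s - p) := by nlinarith
    have hmain : σ ≤ 2 * (s - p) * (L + σ * s) := by nlinarith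
    rw [div_le_iff₀ (by positivity)]
    have expand : 2 / σ ^ 2 * (σ * (s - p) / (L + σ * s)) * (L + σ) * (L + σ * s) ^ 2
        = (2 * (s - p) * (L + σ * s) / σ) * (L + σ) := by field_simp
    rw [expand]
    have hc : 1 ≤ 2 * (s - p) * (L + σ * s) / σ := by
      rw [le_div_iff₀ hσ]; linarith
    nlinarith [mul_le_mul_of_nonneg_right hc (by positivity : (0:ℝ) ≤ L + σ)]
  have step3 : 2 / σ ^ 2 * (σ * (s - p) / (L + σ * s)) * (L + σ)
      ≤ 2 / σ ^ 2 * (Real.log (L + σ * s) - Real.log (L + σ * p)) * (L + σ) := by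
    apply mul_le_mul_of_nonneg_right _ (by positivity)
    apply mul_le_mul_of_nonneg_left hlog (by positivity)
  linarith

theorem stmt_19 (L σ : ℝ) (hL : 0 < L) (hσ : 0 < σ)
    (η : ℕ → ℝ) (hη : ∀ t, η t = 1 / (L + σ * Real.sqrt t)) (T : ℕ) :
    ∑ t ∈ Finset.Icc 1 T, η t ^ 2 * (L + σ * (Real.sqrt t - Real.sqrt ((t : ℝ) - 1)))
      ≤ 2 / σ ^ 2 * Real.log (1 + σ * Real.sqrt T / L) * (L + σ) ∧
    2 / σ ^ 2 * Real.log (1 + σ * Real.sqrt T / L) * (L + σ)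
      ≤ 2 * (L + σ) / σ ^ 2 * Real.log (1 + σ * Real.sqrt T / L) := by
  refine ⟨?_, le_of_eq (by ring)⟩
  have key : ∀ t ∈ Finset.Icc 1 T,
      η t ^ 2 * (L + σ * (Real.sqrt t - Real.sqrt ((t : ℝ) - 1)))
        ≤ (fun t : ℕ => 2 / σ ^ 2 * Real.log (L + σ * Real.sqrt t) * (L + σ)) t
          - (fun t : ℕ => 2 / σ ^ 2 * Real.log (L + σ * Real.sqrt t) * (L + σ)) (t - 1) := by
    intro t ht
    simp only [Finset.mem_Icc] at ht
    obtain ⟨ht1, -⟩ := ht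
    have hcast : ((t - 1 : ℕ) : ℝ) = (t : ℝ) - 1 := by
      have : (1:ℕ) ≤ t := ht1
      push_cast [this]
      ring
    have ht1' : (1 : ℝ) ≤ (t : ℝ) := by exact_mod_cast ht1
    have hs1 : 1 ≤ Real.sqrt t := by
      rw [show (1:ℝ) = Real.sqrt 1 by simp]
      exact Real.sqrt_le_sqrt ht1'
    have hps : Real.sqrt ((t : ℝ) - 1) ≤ Real.sqrt t := Real.sqrt_le_sqrt (by linarith)
    have hp0 : 0 ≤ Real.sqrt ((t : ℝ) - 1) := Real.sqrt_nonneg _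
    have hs2 : Real.sqrt t ^ 2 = (t : ℝ) := Real.sq_sqrt (by linarith)
    have hp2 : Real.sqrt ((t : ℝ) - 1) ^ 2 = (t : ℝ) - 1 := Real.sq_sqrt (by linarith)
    have hdiff : (Real.sqrt t - Real.sqrt ((t : ℝ) - 1)) *
        (Real.sqrt t + Real.sqrt ((t : ℝ) - 1)) = 1 := by nlinarith
    have := per_term L σ (Real.sqrt t) (Real.sqrt ((t : ℝ) - 1)) hL hσ hp0 hs1 hps hdiff
    simp only [hη]
    simp only [hcast]
    linarith
  calc ∑ t ∈ Finset.Icc 1 T, η t ^ 2 * (L + σ * (Real.sqrt t - Real.sqrt ((t : ℝ) - 1)))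
      ≤ ∑ t ∈ Finset.Icc 1 T,
          ((fun t : ℕ => 2 / σ ^ 2 * Real.log (L + σ * Real.sqrt t) * (L + σ)) t
          - (fun t : ℕ => 2 / σ ^ 2 * Real.log (L + σ * Real.sqrt t) * (L + σ)) (t - 1)) :=
        Finset.sum_le_sum key
    _ = 2 / σ ^ 2 * Real.log (L + σ * Real.sqrt T) * (L + σ)
        - 2 / σ ^ 2 * Real.log L * (L + σ) := by
        rw [telescope_aux]; norm_num
    _ = 2 / σ ^ 2 * Real.log (1 + σ * Real.sqrt T / L) * (L + σ) := by
        have hlog : Real.log (L + σ * Real.sqrt T) - Real.log L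
            = Real.log (1 + σ * Real.sqrt T / L) := by
          rw [← Real.log_div (by positivity) hL.ne']
          congr 1
          field_simp
        rw [← hlog]
        ring
end
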